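/- Let g : ℝ → ℝ with D[g](x) := ∫_ℝ (g(x) - g(x-α))²/α² dα finite at x. Then for all α > 0, the second-order remainder R₂(x,α) := (1/α)∫_{x-α}^{x}∫_{x}^{z} (g(w) - g(x)) dw dz satisfies |R₂(x,α)| ≤ C α^{3/2} (D[g](x))^{1/2} for some universal constant C > 0. -/

import Mathlib

open Real MeasureTheory
set_option maxHeartbeats 1000000

theorem stmt_3 :
    ∃ C : ℝ, 0 < C ∧
      ∀ (g : ℝ → ℝ) (x : ℝ), Measurable g →
        Integrable (fun α : ℝ => (g x - g (x - α))^2 / α^2) →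
        ∀ α : ℝ, 0 < α →
          |(1/α) * ∫ z in (x - α)..x, ∫ w in x..z, (g w - g x)| ≤
            C * α ^ ((3:ℝ)/2) *
              Real.sqrt (∫ a : ℝ, (g x - g (x - a))^2 / a^2) := by
  refine ⟨1, one_pos, ?_⟩
  intro g x hg hInt α hα
  set D : ℝ := ∫ a : ℝ, (g x - g (x - a))^2 / a^2 with hDdef
  have hD0 : 0 ≤ D := integral_nonneg fun a => div_nonneg (sq_nonneg _) (sq_nonneg _)
  -- integrability of a ↦ (g (x-a) - g x)^2 on Ioc 0 α
  have hmeas : Measurable fun a : ℝ => (g (x - a) - g x) ^ 2 :=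
    ((hg.comp (measurable_const.sub measurable_id)).sub measurable_const).pow_const 2
  have h2a : IntegrableOn (fun a : ℝ => (g (x - a) - g x) ^ 2) (Set.Ioc 0 α) := by
    refine Integrable.mono' ((hInt.const_mul (α ^ 2)).restrict)
      hmeas.aestronglyMeasurable.restrict ?_
    filter_upwards [ae_restrict_mem measurableSet_Ioc] with a ha
    have ha0 : 0 < a := ha.1
    have haα : a ≤ α := ha.2
    rw [Real.norm_eq_abs, abs_of_nonneg (sq_nonneg _)]
    have h1 : (g (x - a) - g x) ^ 2 = (g x - g (x - a)) ^ 2 / a ^ 2 * a ^ 2 := by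
      field_simp
      ring
    rw [h1]
    have : (g x - g (x - a)) ^ 2 / a ^ 2 * a ^ 2 ≤ (g x - g (x - a)) ^ 2 / a ^ 2 * α ^ 2 := by
      apply mul_le_mul_of_nonneg_left _ (div_nonneg (sq_nonneg _) (sq_nonneg _))
      nlinarith
    linarith [this]
  have h2a' : IntervalIntegrable (fun a : ℝ => (g (x - a) - g x) ^ 2) volume 0 α :=
    (intervalIntegrable_iff_integrableOn_Ioc_of_le hα.le).mpr h2a
  -- integrability of w ↦ (g w - g x)^2 on Ioc (x-α) x
  have hJint' : IntervalIntegrable (fun w : ℝ => (g w - g x) ^ 2) volume (x - α) x := by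
    have := (h2a'.comp_sub_left x).symm
    simpa using this
  have hJint : IntegrableOn (fun w : ℝ => (g w - g x) ^ 2) (Set.Ioc (x - α) x) :=
    (intervalIntegrable_iff_integrableOn_Ioc_of_le (by linarith)).mp hJint'
  set J : ℝ := ∫ w in Set.Ioc (x - α) x, (g w - g x) ^ 2 with hJdef
  have hJ0 : 0 ≤ J :=
    setIntegral_nonneg measurableSet_Ioc fun w _ => sq_nonneg _
  -- J ≤ α^2 * D
  have hJle : J ≤ α ^ 2 * D := by
    have e1 : J = ∫ w in (x - α)..x, (g w - g x) ^ 2 :=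
      (intervalIntegral.integral_of_le (by linarith)).symm
    have e2 : (∫ a in (0:ℝ)..α, (g (x - a) - g x) ^ 2)
        = ∫ w in (x - α)..x, (g w - g x) ^ 2 := by
      have := intervalIntegral.integral_comp_sub_left
        (a := (0:ℝ)) (b := α) (fun w : ℝ => (g w - g x) ^ 2) x
      simpa using this
    have e3 : (∫ a in (0:ℝ)..α, (g (x - a) - g x) ^ 2)
        = ∫ a in Set.Ioc (0:ℝ) α, (g (x - a) - g x) ^ 2 :=
      intervalIntegral.integral_of_le hα.le
    have step : (∫ a in Set.Ioc (0:ℝ) α, (g (x - a) - g x) ^ 2)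
        ≤ ∫ a in Set.Ioc (0:ℝ) α, α ^ 2 * ((g x - g (x - a)) ^ 2 / a ^ 2) := by
      refine setIntegral_mono_on h2a ((hInt.const_mul (α ^ 2)).restrict)
        measurableSet_Ioc ?_
      intro a ha
      have ha0 : 0 < a := ha.1
      have h1 : (g (x - a) - g x) ^ 2 = (g x - g (x - a)) ^ 2 / a ^ 2 * a ^ 2 := by
        field_simp; ring
      rw [h1]
      have := mul_le_mul_of_nonneg_left (by nlinarith [ha.2] : a ^ 2 ≤ α ^ 2)
        (div_nonneg (sq_nonneg (g x - g (x - a))) (sq_nonneg a))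
      linarith [this]
    have step2 : (∫ a in Set.Ioc (0:ℝ) α, α ^ 2 * ((g x - g (x - a)) ^ 2 / a ^ 2))
        ≤ α ^ 2 * D := by
      rw [integral_const_mul]
      refine mul_le_mul_of_nonneg_left ?_ (sq_nonneg α)
      exact setIntegral_le_integral hInt
        (Filter.Eventually.of_forall fun a => div_nonneg (sq_nonneg _) (sq_nonneg _))
    calc J = ∫ a in Set.Ioc (0:ℝ) α, (g (x - a) - g x) ^ 2 := by rw [e1, ← e2, e3]
      _ ≤ _ := step
      _ ≤ α ^ 2 * D := step2
  -- integrability of |g w - g x| on Ioc (x-α) x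
  have hμfin : volume (Set.Ioc (x - α) x) < ⊤ := by
    rw [Real.volume_Ioc]; exact ENNReal.ofReal_lt_top
  have hone : IntegrableOn (fun _ : ℝ => (1:ℝ)) (Set.Ioc (x - α) x) :=
    integrableOn_const hμfin.ne
  have hbound : IntegrableOn (fun w : ℝ => (g w - g x) ^ 2 + 1) (Set.Ioc (x - α) x) :=
    hJint.add hone
  have habsint : IntegrableOn (fun w : ℝ => |g w - g x|) (Set.Ioc (x - α) x) := by
    refine hbound.mono'
      ((hg.sub measurable_const).abs).aestronglyMeasurable.restrict ?_
    refine Filter.Eventually.of_forall fun w => ?_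
    rw [Real.norm_eq_abs, abs_abs]
    nlinarith [sq_abs (g w - g x), sq_nonneg (|g w - g x| - 1)]
  set I : ℝ := ∫ w in Set.Ioc (x - α) x, |g w - g x| with hIdef
  have hI0 : 0 ≤ I := setIntegral_nonneg measurableSet_Ioc fun w _ => abs_nonneg _
  -- I ≤ sqrt J * sqrt α
  have hICS : I ≤ Real.sqrt J * Real.sqrt α := by
    rcases eq_or_lt_of_le hJ0 with hJz | hJpos
    · -- J = 0 : f = 0 a.e.
      have hzero : (fun w : ℝ => (g w - g x) ^ 2)
          =ᵐ[volume.restrict (Set.Ioc (x - α) x)] 0 :=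
        (integral_eq_zero_iff_of_nonneg_ae
          (Filter.Eventually.of_forall fun w => sq_nonneg _) hJint).mp hJz.symm
      have : I = 0 := by
        rw [hIdef]
        rw [integral_eq_zero_iff_of_nonneg_ae
          (Filter.Eventually.of_forall fun w => abs_nonneg _) habsint]
        filter_upwards [hzero] with w hw
        have : (g w - g x) ^ 2 = 0 := hw
        have : g w - g x = 0 := by nlinarith
        simp [this]
      rw [this]
      positivity
    · set t : ℝ := Real.sqrt (J / α) with htdef
      have ht0 : 0 < t := Real.sqrt_pos.mpr (div_pos hJpos hα)
      have ht2 : t ^ 2 = J / α := Real.sq_sqrt (le_of_lt (div_pos hJpos hα))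
      have hptwise : ∀ w, |g w - g x| ≤ (g w - g x) ^ 2 / (2 * t) + t / 2 := by
        intro w
        rw [div_add_div _ _ (by positivity : (2:ℝ) * t ≠ 0) (two_ne_zero), le_div_iff₀ (by positivity)]
        nlinarith [sq_abs (g w - g x), sq_nonneg (|g w - g x| - t)]
      have hbint : IntegrableOn
          (fun w : ℝ => (g w - g x) ^ 2 / (2 * t) + t / 2) (Set.Ioc (x - α) x) :=
        (hJint.div_const _).add (integrableOn_const hμfin.ne)
      have hIle : I ≤ J / (2 * t) + α * (t / 2) := by
        have := setIntegral_mono_on habsint hbint measurableSet_Ioc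
          (fun w _ => hptwise w)
        rw [integral_add (hJint.div_const _) (integrableOn_const hμfin.ne)] at this
        rw [integral_div, setIntegral_const, Real.volume_real_Ioc_of_le (by linarith),
          show x - (x - α) = α by ring,
          smul_eq_mul] at this
        exact this
      have hsqJ : Real.sqrt J = t * Real.sqrt α := by
        have h1 : (t * Real.sqrt α) ^ 2 = J := by
          rw [mul_pow, Real.sq_sqrt hα.le, ht2]
          field_simp
        rw [← h1, Real.sqrt_sq (by positivity)]
      have hJeq : J = t ^ 2 * α := by
        rw [ht2]; field_simp
      calc I ≤ J / (2 * t) + α * (t / 2) := hIle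
        _ = t * α := by rw [hJeq]; field_simp; ring
        _ = (t * Real.sqrt α) * Real.sqrt α := by
            rw [mul_assoc, Real.mul_self_sqrt hα.le]
        _ = Real.sqrt J * Real.sqrt α := by rw [hsqJ]
  -- outer integral bound
  have houter : |∫ z in (x - α)..x, ∫ w in x..z, (g w - g x)| ≤ I * α := by
    have hb : ∀ z ∈ Set.uIoc (x - α) x, ‖∫ w in x..z, (g w - g x)‖ ≤ I := by
      intro z hz
      rw [Set.uIoc_of_le (by linarith)] at hz
      have hz1 : x - α ≤ z := le_of_lt hz.1
      have hz2 : z ≤ x := hz.2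
      rw [Real.norm_eq_abs, intervalIntegral.integral_symm z x, abs_neg]
      have h1 : |∫ w in z..x, (g w - g x)| ≤ ∫ w in z..x, |g w - g x| :=
        intervalIntegral.abs_integral_le_integral_abs hz2
      have h2 : (∫ w in z..x, |g w - g x|) = ∫ w in Set.Ioc z x, |g w - g x| :=
        intervalIntegral.integral_of_le hz2
      have h3 : (∫ w in Set.Ioc z x, |g w - g x|) ≤ I := by
        refine setIntegral_mono_set habsint
          (Filter.Eventually.of_forall fun w => abs_nonneg _) ?_
        exact Filter.Eventually.of_forall (Set.Ioc_subset_Ioc_left hz1)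
      linarith [h1, h2 ▸ h3]
    have := intervalIntegral.norm_integral_le_of_norm_le_const hb
    rw [Real.norm_eq_abs, show |x - (x - α)| = α by rw [abs_of_pos (by linarith)]; ring] at this
    linarith
  -- combine
  have hLHS : |(1/α) * ∫ z in (x - α)..x, ∫ w in x..z, (g w - g x)| ≤ I := by
    rw [abs_mul, abs_of_pos (by positivity : (0:ℝ) < 1/α)]
    rw [div_mul_eq_mul_div, one_mul, div_le_iff₀ hα]
    exact houter
  have hsqJle : Real.sqrt J ≤ α * Real.sqrt D := by
    have : Real.sqrt J ≤ Real.sqrt (α ^ 2 * D) := Real.sqrt_le_sqrt hJle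
    rwa [Real.sqrt_mul (sq_nonneg α), Real.sqrt_sq hα.le] at this
  have hrpow : α ^ ((3:ℝ)/2) = α * Real.sqrt α := by
    rw [show (3:ℝ)/2 = 1 + 1/2 by norm_num, Real.rpow_add hα, Real.rpow_one,
      ← Real.sqrt_eq_rpow]
  calc |(1/α) * ∫ z in (x - α)..x, ∫ w in x..z, (g w - g x)| ≤ I := hLHS
    _ ≤ Real.sqrt J * Real.sqrt α := hICS
    _ ≤ (α * Real.sqrt D) * Real.sqrt α := by
        exact mul_le_mul_of_nonneg_right hsqJle (Real.sqrt_nonneg α)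
    _ = 1 * α ^ ((3:ℝ)/2) * Real.sqrt D := by rw [hrpow]; ring
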